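/- Suppose the action of G on M is continuous, proper and cocompact. Then for every continuous compactly supported s : M → H, the integral ∫_G ⟨s, g·s⟩_{L²} dg is a nonnegative real number. -/

import Mathlib

open MeasureTheory Pointwise Function Set

theorem properSet_compact' {G : Type*} [Group G] [TopologicalSpace G]
    {M : Type*} [TopologicalSpace M] [MulAction G M]
    (hproper : IsProperMap (fun p : G × M => (p.1 • p.2, p.2)))
    {A B : Set M} (hA : IsCompact A) (hB : IsCompact B) :
    IsCompact {g : G | ∃ a ∈ A, g • a ∈ B} := by
  have h1 : IsCompact ((fun p : G × M => (p.1 • p.2, p.2)) ⁻¹' (B ×ˢ A)) :=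
    hproper.isCompact_preimage (hB.prod hA)
  have h2 : {g : G | ∃ a ∈ A, g • a ∈ B}
      = Prod.fst '' ((fun p : G × M => (p.1 • p.2, p.2)) ⁻¹' (B ×ˢ A)) := by
    ext g
    simp only [mem_setOf_eq, mem_image, mem_preimage, mem_prod, Prod.exists]
    constructor
    · rintro ⟨a, ha, hga⟩; exact ⟨g, a, ⟨hga, ha⟩, rfl⟩
    · rintro ⟨g', a, ⟨hga, ha⟩, rfl⟩; exact ⟨a, ha, hga⟩
  rw [h2]
  exact h1.image continuous_fst

theorem continuous_rho_apply' {G : Type*} [Group G] [TopologicalSpace G]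
    {H : Type*} [NormedAddCommGroup H] [InnerProductSpace ℂ H]
    (ρ : G →* (H ≃ₗᵢ[ℂ] H)) (hρ : ∀ v : H, Continuous fun g : G => ρ g v) :
    Continuous fun p : G × H => ρ p.1 p.2 := by
  rw [continuous_iff_continuousAt]
  rintro ⟨g₀, v₀⟩
  have key : ∀ p : G × H, ‖ρ p.1 p.2 - ρ g₀ v₀‖ ≤ ‖p.2 - v₀‖ + ‖ρ p.1 v₀ - ρ g₀ v₀‖ := by
    rintro ⟨g, v⟩
    calc ‖ρ g v - ρ g₀ v₀‖ = ‖(ρ g v - ρ g v₀) + (ρ g v₀ - ρ g₀ v₀)‖ := by congr 1; abel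
      _ ≤ ‖ρ g v - ρ g v₀‖ + ‖ρ g v₀ - ρ g₀ v₀‖ := norm_add_le _ _
      _ = ‖v - v₀‖ + ‖ρ g v₀ - ρ g₀ v₀‖ := by
          rw [← LinearIsometryEquiv.map_sub, LinearIsometryEquiv.norm_map]
  have h1 : Filter.Tendsto (fun p : G × H => ‖p.2 - v₀‖ + ‖ρ p.1 v₀ - ρ g₀ v₀‖)
      (nhds (g₀, v₀)) (nhds 0) := by
    have : Continuous (fun p : G × H => ‖p.2 - v₀‖ + ‖ρ p.1 v₀ - ρ g₀ v₀‖) :=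
      ((continuous_snd.sub continuous_const).norm).add
        ((((hρ v₀).comp continuous_fst).sub continuous_const).norm)
    have h0 : (fun p : G × H => ‖p.2 - v₀‖ + ‖ρ p.1 v₀ - ρ g₀ v₀‖) (g₀, v₀) = 0 := by simp
    have := this.continuousAt (x := (g₀, v₀))
    unfold ContinuousAt at this
    rwa [h0] at this
  have h2 : Filter.Tendsto (fun p : G × H => ρ p.1 p.2 - ρ g₀ v₀) (nhds (g₀, v₀)) (nhds 0) :=
    squeeze_zero_norm key h1
  have := tendsto_sub_nhds_zero_iff.mp h2
  exact this

theorem continuous_integral_kernel' {G : Type*} [TopologicalSpace G] [T2Space G]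
    [MeasurableSpace G] [OpensMeasurableSpace G]
    (μG : Measure G) [IsFiniteMeasureOnCompacts μG]
    {M : Type*} [TopologicalSpace M] [LocallyCompactSpace M]
    {E : Type*} [NormedAddCommGroup E] [NormedSpace ℝ E]
    (F : G → M → E) (hF : Continuous (Function.uncurry F))
    (hcs : ∀ V : Set M, IsCompact V → ∃ C : Set G, IsCompact C ∧
      ∀ n ∈ V, ∀ g : G, F g n ≠ 0 → g ∈ C) :
    Continuous fun n => ∫ g, F g n ∂μG := by
  rw [continuous_iff_continuousAt]
  intro n₀
  obtain ⟨V, hV, hVmem⟩ := exists_compact_mem_nhds n₀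
  obtain ⟨C, hC, hCsupp⟩ := hcs V hV
  -- integrability of each slice
  have hint : ∀ n ∈ V, Integrable (fun g => F g n) μG := by
    intro n hn
    have hcont : Continuous fun g => F g n := hF.comp (continuous_id.prodMk continuous_const)
    have hsupp : HasCompactSupport fun g => F g n :=
      HasCompactSupport.intro hC fun g hg => by
        by_contra h; exact hg (hCsupp n hn g h)
    exact hcont.integrable_of_hasCompactSupport hsupp
  rw [ContinuousAt, Metric.tendsto_nhds]
  intro ε hε
  set c : ℝ := (μG C).toReal with hc
  have hc0 : 0 ≤ c := ENNReal.toReal_nonneg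
  set δ : ℝ := ε / (2 * (c + 1)) with hδdef
  have hδ : 0 < δ := by positivity
  have hu : {z : E × E | dist z.1 z.2 < δ} ∈ uniformity E := Metric.dist_mem_uniformity hδ
  obtain ⟨v, hv, hvp⟩ := hC.mem_uniformity_of_prod (f := fun (n : M) (g : G) => F g n)
    (s := (univ : Set M)) (q := n₀)
    (hf := by
      apply Continuous.continuousOn
      exact hF.comp (continuous_snd.prodMk continuous_fst))
    (mem_univ n₀) hu
  rw [nhdsWithin_univ] at hv
  filter_upwards [hv, hVmem] with n hnv hnV
  have hne : ∀ g : G, ‖F g n - F g n₀‖ ≤ C.indicator (fun _ => δ) g := by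
    intro g
    by_cases hg : g ∈ C
    · rw [Set.indicator_of_mem hg]
      have := hvp n hnv g hg
      rw [← dist_eq_norm]
      exact le_of_lt this
    · rw [Set.indicator_of_notMem hg]
      have h1 : F g n = 0 := by by_contra h; exact hg (hCsupp n hnV g h)
      have h2 : F g n₀ = 0 := by by_contra h; exact hg (hCsupp n₀ (mem_of_mem_nhds hVmem) g h)
      simp [h1, h2]
  have h1 : dist (∫ g, F g n ∂μG) (∫ g, F g n₀ ∂μG) = ‖∫ g, (F g n - F g n₀) ∂μG‖ := by
    rw [dist_eq_norm, integral_sub (hint n hnV) (hint n₀ (mem_of_mem_nhds hVmem))]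
  rw [h1]
  calc ‖∫ g, (F g n - F g n₀) ∂μG‖ ≤ ∫ g, ‖F g n - F g n₀‖ ∂μG :=
        norm_integral_le_integral_norm _
    _ ≤ ∫ g, C.indicator (fun _ => δ) g ∂μG := by
        apply integral_mono _ _ hne
        · exact ((hint n hnV).sub (hint n₀ (mem_of_mem_nhds hVmem))).norm
        · rw [integrable_indicator_iff hC.isClosed.measurableSet]
          exact integrableOn_const hC.measure_lt_top.ne enorm_ne_top
    _ = c * δ := by
        rw [integral_indicator_const _ hC.isClosed.measurableSet]
        simp [hc, smul_eq_mul]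
        exact Or.inl rfl
    _ < ε := by
        rw [hδdef]
        rw [div_eq_mul_inv]
        have h2 : c * (ε * (2 * (c + 1))⁻¹) < ε := by
          rw [mul_comm c, mul_assoc]
          nth_rewrite 2 [← mul_one ε]
          apply mul_lt_mul_of_pos_left _ hε
          rw [inv_mul_lt_iff₀ (by positivity)]
          nlinarith
        exact h2

theorem exists_cutoff' {G : Type*} [Group G] [TopologicalSpace G] [IsTopologicalGroup G]
    [LocallyCompactSpace G] [T2Space G] [MeasurableSpace G] [BorelSpace G]
    (μG : Measure G) [μG.IsHaarMeasure] [μG.IsMulRightInvariant]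
    {M : Type*} [TopologicalSpace M] [LocallyCompactSpace M] [T2Space M]
    [MulAction G M] [ContinuousSMul G M]
    [MeasurableSpace M] [BorelSpace M]
    (hproper : IsProperMap (fun p : G × M => (p.1 • p.2, p.2)))
    (hcocompact : ∃ K : Set M, IsCompact K ∧ ⋃ g : G, g • K = Set.univ) :
    ∃ c' : M → ℝ, Continuous c' ∧ HasCompactSupport c' ∧ (∀ n, 0 ≤ c' n) ∧
      ∀ n : M, ∫ g, c' (g⁻¹ • n) ∂μG = 1 := by
  obtain ⟨K, hK, hKcov⟩ := hcocompact
  obtain ⟨f, hf1, -, hfsupp, hf01⟩ :=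
    exists_continuous_one_zero_of_isCompact hK isClosed_empty (disjoint_empty K)
  set c : M → ℝ := fun n => f n with hcdef
  have hccont : Continuous c := f.continuous
  have hcnn : ∀ n, 0 ≤ c n := fun n => (hf01 n).1
  -- the smeared function h
  set h : M → ℝ := fun n => ∫ g, c (g⁻¹ • n) ∂μG with hhdef
  have hCsupp : ∀ (V : Set M), IsCompact V → ∃ C : Set G, IsCompact C ∧
      ∀ n ∈ V, ∀ g : G, c (g⁻¹ • n) ≠ 0 → g ∈ C := by
    intro V hV
    refine ⟨{g : G | ∃ a ∈ tsupport c, g • a ∈ V}, properSet_compact' hproper hfsupp hV, ?_⟩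
    intro n hn g hg
    refine ⟨g⁻¹ • n, subset_tsupport c hg, ?_⟩
    rw [smul_inv_smul]; exact hn
  have hFcont : Continuous (Function.uncurry fun (g : G) (n : M) => c (g⁻¹ • n)) := by
    apply hccont.comp
    exact (continuous_fst.inv.smul continuous_snd)
  have hslice_cont : ∀ n : M, Continuous fun g : G => c (g⁻¹ • n) := fun n =>
    hccont.comp (continuous_inv.smul continuous_const)
  have hslice_supp : ∀ n : M, HasCompactSupport fun g : G => c (g⁻¹ • n) := by
    intro n
    obtain ⟨C, hCc, hCs⟩ := hCsupp {n} isCompact_singleton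
    exact HasCompactSupport.intro hCc fun g hg => by
      by_contra hne; exact hg (hCs n rfl g hne)
  have hslice_int : ∀ n : M, Integrable (fun g : G => c (g⁻¹ • n)) μG := fun n =>
    (hslice_cont n).integrable_of_hasCompactSupport (hslice_supp n)
  have hhcont : Continuous h := continuous_integral_kernel' μG _ hFcont hCsupp
  have hhinv : ∀ (g₀ : G) (n : M), h (g₀ • n) = h n := by
    intro g₀ n
    have key : ∀ g : G, c (g⁻¹ • g₀ • n) = (fun u : G => c (u⁻¹ • n)) (g₀⁻¹ * g) := by
      intro g
      simp only [mul_inv_rev, inv_inv, mul_smul]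
    calc h (g₀ • n) = ∫ g, (fun u : G => c (u⁻¹ • n)) (g₀⁻¹ * g) ∂μG := by
          simp only [hhdef]; congr 1; ext g; exact key g
      _ = ∫ g, c (g⁻¹ • n) ∂μG := integral_mul_left_eq_self (fun u : G => c (u⁻¹ • n)) g₀⁻¹
  have hhpos : ∀ n, 0 < h n := by
    intro n
    have hn : n ∈ ⋃ g : G, g • K := hKcov ▸ mem_univ n
    obtain ⟨t, ⟨g₀, rfl⟩, hnt⟩ := hn
    obtain ⟨k, hk, rfl⟩ := hnt
    rw [hhinv g₀ k]
    rw [hhdef]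
    apply (integral_pos_iff_support_of_nonneg (fun g => hcnn _) (hslice_int k)).2
    have hopen : IsOpen (Function.support fun g : G => c (g⁻¹ • k)) :=
      isOpen_ne_fun (hslice_cont k) continuous_const
    have hmem : (1 : G) ∈ Function.support fun g : G => c (g⁻¹ • k) := by
      simp only [Function.mem_support, inv_one, one_smul]
      have hfk : f k = 1 := by simpa using hf1 hk
      show f k ≠ 0
      rw [hfk]; norm_num
    exact hopen.measure_pos μG ⟨1, hmem⟩
  refine ⟨fun n => c n / h n, hccont.div hhcont (fun n => (hhpos n).ne'), ?_, ?_, ?_⟩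
  · apply HasCompactSupport.intro hfsupp
    intro n hn
    have : c n = 0 := image_eq_zero_of_notMem_tsupport hn
    simp [this]
  · intro n
    exact div_nonneg (hcnn n) (hhpos n).le
  · intro n
    have key : ∀ g : G, c (g⁻¹ • n) / h (g⁻¹ • n) = c (g⁻¹ • n) * (h n)⁻¹ := by
      intro g
      rw [hhinv g⁻¹ n, div_eq_mul_inv]
    calc (∫ g, c (g⁻¹ • n) / h (g⁻¹ • n) ∂μG) = ∫ g, c (g⁻¹ • n) * (h n)⁻¹ ∂μG := by
          congr 1; ext g; exact key g
      _ = (∫ g, c (g⁻¹ • n) ∂μG) * (h n)⁻¹ := integral_mul_const _ _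
      _ = h n * (h n)⁻¹ := rfl
      _ = 1 := mul_inv_cancel₀ (hhpos n).ne'

/-- For a proper cocompact action and a continuous compactly supported `H`-valued
function `s`, the integral `∫_G ⟨s, g·s⟩_{L²} dg` is a nonnegative real number. -/
theorem integral_pairing_nonneg
    {G : Type*} [Group G] [TopologicalSpace G] [IsTopologicalGroup G]
    [LocallyCompactSpace G] [T2Space G] [MeasurableSpace G] [BorelSpace G]
    (μG : Measure G) [μG.IsHaarMeasure] [μG.IsMulRightInvariant]
    {M : Type*} [TopologicalSpace M] [LocallyCompactSpace M] [T2Space M]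
    [MulAction G M] [ContinuousSMul G M]
    [MeasurableSpace M] [BorelSpace M]
    (μ : Measure M) [μ.Regular] [SMulInvariantMeasure G M μ]
    {H : Type*} [NormedAddCommGroup H] [InnerProductSpace ℂ H] [CompleteSpace H]
    (ρ : G →* (H ≃ₗᵢ[ℂ] H)) (hρ : ∀ v : H, Continuous fun g : G => ρ g v)
    (hproper : IsProperMap (fun p : G × M => (p.1 • p.2, p.2)))
    (hcocompact : ∃ K : Set M, IsCompact K ∧ ⋃ g : G, g • K = Set.univ)
    (s : M → H) (hs_cont : Continuous s) (hs_supp : HasCompactSupport s) :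
    ∃ r : ℝ, 0 ≤ r ∧
      (∫ g, ∫ m, (inner ℂ (s m) (ρ g (s (g⁻¹ • m))) : ℂ) ∂μ ∂μG) = (r : ℂ) := by
  -- basic facts about ρ
  have hρinv : ∀ (g : G) (x : H), ρ g⁻¹ (ρ g x) = x := by
    intro g x
    have : (ρ g⁻¹ * ρ g) x = ρ g⁻¹ (ρ g x) := rfl
    rw [← this, ← map_mul, inv_mul_cancel, map_one, LinearIsometryEquiv.coe_one, id_eq]
  have hρmul : ∀ (a b : G) (x : H), ρ a (ρ b x) = ρ (a * b) x := by
    intro a b x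
    rw [map_mul]; rfl
  have hρcont := continuous_rho_apply' ρ hρ
  set Ks : Set M := tsupport s with hKs
  have hKsc : IsCompact Ks := hs_supp
  -- the averaged section T
  set T : M → H := fun n => ∫ g, ρ g⁻¹ (s (g • n)) ∂μG with hT
  have hTker_cont : Continuous (Function.uncurry fun (g : G) (n : M) => ρ g⁻¹ (s (g • n))) := by
    show Continuous fun p : G × M => ρ p.1⁻¹ (s (p.1 • p.2))
    exact hρcont.comp ((continuous_fst.inv).prodMk
      (hs_cont.comp (continuous_fst.smul continuous_snd)))
  have hTker_supp : ∀ V : Set M, IsCompact V → ∃ C : Set G, IsCompact C ∧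
      ∀ n ∈ V, ∀ g : G, ρ g⁻¹ (s (g • n)) ≠ 0 → g ∈ C := by
    intro V hV
    refine ⟨{g : G | ∃ a ∈ V, g • a ∈ Ks}, properSet_compact' hproper hV hKsc, ?_⟩
    intro n hn g hg
    refine ⟨n, hn, subset_tsupport s ?_⟩
    intro h0
    exact hg (by rw [h0, map_zero])
  have hTcont : Continuous T :=
    continuous_integral_kernel' μG _ hTker_cont hTker_supp
  have hTslice_int : ∀ n : M, Integrable (fun g : G => ρ g⁻¹ (s (g • n))) μG := by
    intro n
    obtain ⟨C, hCc, hCs⟩ := hTker_supp {n} isCompact_singleton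
    have hcont : Continuous fun g : G => ρ g⁻¹ (s (g • n)) :=
      hTker_cont.comp (continuous_id.prodMk continuous_const)
    have hsupp : HasCompactSupport fun g : G => ρ g⁻¹ (s (g • n)) :=
      HasCompactSupport.intro hCc fun g hg => by
        by_contra hne; exact hg (hCs n rfl g hne)
    exact hcont.integrable_of_hasCompactSupport hsupp
  -- equivariance of T
  have hTequi : ∀ (g₀ : G) (n : M), T (g₀ • n) = ρ g₀ (T n) := by
    intro g₀ n
    have key : ∀ g : G, ρ g⁻¹ (s (g • g₀ • n))
        = (fun u : G => ρ g₀ (ρ u⁻¹ (s (u • n)))) (g * g₀) := by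
      intro g
      simp only
      rw [hρmul, ← mul_smul]
      congr 2
      group
    calc T (g₀ • n) = ∫ g, (fun u : G => ρ g₀ (ρ u⁻¹ (s (u • n)))) (g * g₀) ∂μG := by
          rw [hT]
          exact integral_congr_ae (Filter.Eventually.of_forall fun g => key g)
      _ = ∫ g, ρ g₀ (ρ g⁻¹ (s (g • n))) ∂μG :=
          integral_mul_right_eq_self (fun u : G => ρ g₀ (ρ u⁻¹ (s (u • n)))) g₀
      _ = ρ g₀ (T n) := by
          have h := ((ρ g₀).toLinearIsometry.toContinuousLinearMap).integral_comp_comm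
            (hTslice_int n)
          simp only [LinearIsometry.coe_toContinuousLinearMap,
            LinearIsometryEquiv.coe_toLinearIsometry] at h
          exact h
  -- cutoff function
  obtain ⟨c, hccont, hcsupp, hcnn, hcnorm⟩ := exists_cutoff' μG hproper hcocompact
  set Kc : Set M := tsupport c with hKc
  have hKcc : IsCompact Kc := hcsupp
  set D2 : Set G := {g : G | ∃ a ∈ Kc, g • a ∈ Ks} with hD2
  have hD2c : IsCompact D2 := properSet_compact' hproper hKcc hKsc
  -- Step A: rewrite inner integral
  have stepA : ∀ g : G, (∫ m, (inner ℂ (s m) (ρ g (s (g⁻¹ • m))) : ℂ) ∂μ)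
      = ∫ m, (inner ℂ (ρ g⁻¹ (s (g • m))) (s m) : ℂ) ∂μ := by
    intro g
    have h1 : (∫ m, (inner ℂ (s m) (ρ g (s (g⁻¹ • m))) : ℂ) ∂μ)
        = ∫ m, (inner ℂ (s (g • m)) (ρ g (s (g⁻¹ • g • m))) : ℂ) ∂μ :=
      (integral_smul_eq_self (fun m => (inner ℂ (s m) (ρ g (s (g⁻¹ • m))) : ℂ)) (g := g)).symm
    rw [h1]
    refine integral_congr_ae (Filter.Eventually.of_forall fun m => ?_)
    beta_reduce
    rw [inv_smul_smul]
    calc (inner ℂ (s (g • m)) (ρ g (s m)) : ℂ)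
        = inner ℂ (ρ g⁻¹ (s (g • m))) (ρ g⁻¹ (ρ g (s m))) :=
          ((ρ g⁻¹).inner_map_map _ _).symm
      _ = inner ℂ (ρ g⁻¹ (s (g • m))) (s m) := by rw [hρinv]
  -- Step B: Fubini 1
  have stepB : (∫ g, ∫ m, (inner ℂ (ρ g⁻¹ (s (g • m))) (s m) : ℂ) ∂μ ∂μG)
      = ∫ m, ∫ g, (inner ℂ (ρ g⁻¹ (s (g • m))) (s m) : ℂ) ∂μG ∂μ := by
    apply integral_integral_swap_of_hasCompactSupport
    · show Continuous fun p : G × M => (inner ℂ (ρ p.1⁻¹ (s (p.1 • p.2))) (s p.2) : ℂ)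
      exact Continuous.inner
        (hTker_cont.comp (continuous_fst.prodMk continuous_snd))
        (hs_cont.comp continuous_snd)
    · set D1 : Set G := {g : G | ∃ a ∈ Ks, g • a ∈ Ks} with hD1
      have hD1c : IsCompact D1 := properSet_compact' hproper hKsc hKsc
      apply HasCompactSupport.intro (hD1c.prod hKsc)
      rintro ⟨g, m⟩ hgm
      simp only [Function.uncurry]
      by_contra hne
      apply hgm
      have hsm : s m ≠ 0 := fun h0 => hne (by rw [h0, inner_zero_right])
      have hsgm : s (g • m) ≠ 0 := fun h0 =>
        hne (by rw [h0, map_zero, inner_zero_left])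
      exact ⟨⟨m, subset_tsupport s hsm, subset_tsupport s hsgm⟩, subset_tsupport s hsm⟩
  -- Step C: inner integral is ⟨T m, s m⟩
  have stepC : ∀ m : M, (∫ g, (inner ℂ (ρ g⁻¹ (s (g • m))) (s m) : ℂ) ∂μG)
      = (inner ℂ (T m) (s m) : ℂ) := by
    intro m
    have h1 : ∀ g : G, (inner ℂ (ρ g⁻¹ (s (g • m))) (s m) : ℂ)
        = (starRingEnd ℂ) (inner ℂ (s m) (ρ g⁻¹ (s (g • m)))) := by
      intro g; rw [inner_conj_symm]
    calc (∫ g, (inner ℂ (ρ g⁻¹ (s (g • m))) (s m) : ℂ) ∂μG)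
        = ∫ g, (starRingEnd ℂ) (inner ℂ (s m) (ρ g⁻¹ (s (g • m))) : ℂ) ∂μG :=
          integral_congr_ae (Filter.Eventually.of_forall fun g => h1 g)
      _ = (starRingEnd ℂ) (∫ g, (inner ℂ (s m) (ρ g⁻¹ (s (g • m))) : ℂ) ∂μG) :=
          integral_conj
      _ = (starRingEnd ℂ) (inner ℂ (s m) (T m) : ℂ) := by
          rw [integral_inner (hTslice_int m) (s m)]
      _ = (inner ℂ (T m) (s m) : ℂ) := inner_conj_symm _ _
  -- Step D: insert cutoff
  have stepD : ∀ m : M, (inner ℂ (T m) (s m) : ℂ)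
      = ∫ g, c (g⁻¹ • m) • (inner ℂ (T m) (s m) : ℂ) ∂μG := by
    intro m
    rw [integral_smul_const, hcnorm m, one_smul]
  -- Step E: Fubini 2
  have stepE : (∫ m, ∫ g, c (g⁻¹ • m) • (inner ℂ (T m) (s m) : ℂ) ∂μG ∂μ)
      = ∫ g, ∫ m, c (g⁻¹ • m) • (inner ℂ (T m) (s m) : ℂ) ∂μ ∂μG := by
    apply integral_integral_swap_of_hasCompactSupport
    · show Continuous fun p : M × G =>
        c (p.2⁻¹ • p.1) • (inner ℂ (T p.1) (s p.1) : ℂ)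
      exact (hccont.comp ((continuous_snd.inv).smul continuous_fst)).smul
        (Continuous.inner (hTcont.comp continuous_fst) (hs_cont.comp continuous_fst))
    · apply HasCompactSupport.intro (hKsc.prod hD2c)
      rintro ⟨m, g⟩ hgm
      simp only [Function.uncurry]
      by_contra hne
      apply hgm
      have hc0 : c (g⁻¹ • m) ≠ 0 := fun h0 => hne (by rw [h0, zero_smul])
      have hsm : s m ≠ 0 := fun h0 => hne (by rw [h0, inner_zero_right, smul_zero])
      refine ⟨subset_tsupport s hsm, g⁻¹ • m, subset_tsupport c hc0, ?_⟩
      rw [smul_inv_smul]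
      exact subset_tsupport s hsm
  -- Step F: per g substitution
  have stepF : ∀ g : G, (∫ m, c (g⁻¹ • m) • (inner ℂ (T m) (s m) : ℂ) ∂μ)
      = ∫ m, c m • (inner ℂ (T m) (ρ g⁻¹ (s (g • m))) : ℂ) ∂μ := by
    intro g
    have h1 : (∫ m, c (g⁻¹ • m) • (inner ℂ (T m) (s m) : ℂ) ∂μ)
        = ∫ m, c (g⁻¹ • g • m) • (inner ℂ (T (g • m)) (s (g • m)) : ℂ) ∂μ :=
      (integral_smul_eq_self (fun m => c (g⁻¹ • m) • (inner ℂ (T m) (s m) : ℂ)) (g := g)).symm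
    rw [h1]
    refine integral_congr_ae (Filter.Eventually.of_forall fun m => ?_)
    beta_reduce
    rw [inv_smul_smul, hTequi g m]
    congr 1
    calc (inner ℂ (ρ g (T m)) (s (g • m)) : ℂ)
        = inner ℂ (ρ g⁻¹ (ρ g (T m))) (ρ g⁻¹ (s (g • m))) := ((ρ g⁻¹).inner_map_map _ _).symm
      _ = inner ℂ (T m) (ρ g⁻¹ (s (g • m))) := by rw [hρinv]
  -- Step G: Fubini 3
  have stepG : (∫ g, ∫ m, c m • (inner ℂ (T m) (ρ g⁻¹ (s (g • m))) : ℂ) ∂μ ∂μG)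
      = ∫ m, ∫ g, c m • (inner ℂ (T m) (ρ g⁻¹ (s (g • m))) : ℂ) ∂μG ∂μ := by
    apply integral_integral_swap_of_hasCompactSupport
    · show Continuous fun p : G × M =>
        c p.2 • (inner ℂ (T p.2) (ρ p.1⁻¹ (s (p.1 • p.2))) : ℂ)
      exact (hccont.comp continuous_snd).smul
        (Continuous.inner (hTcont.comp continuous_snd)
          (hTker_cont.comp (continuous_fst.prodMk continuous_snd)))
    · apply HasCompactSupport.intro (hD2c.prod hKcc)
      rintro ⟨g, m⟩ hgm
      simp only [Function.uncurry]
      by_contra hne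
      apply hgm
      have hc0 : c m ≠ 0 := fun h0 => hne (by rw [h0, zero_smul])
      have hsgm : s (g • m) ≠ 0 := fun h0 =>
        hne (by rw [h0, map_zero, inner_zero_right, smul_zero])
      exact ⟨⟨m, subset_tsupport c hc0, subset_tsupport s hsgm⟩, subset_tsupport c hc0⟩
  -- Step H: inner integral is c m • ⟨T m, T m⟩
  have stepH : ∀ m : M, (∫ g, c m • (inner ℂ (T m) (ρ g⁻¹ (s (g • m))) : ℂ) ∂μG)
      = ((c m * ‖T m‖ ^ 2 : ℝ) : ℂ) := by
    intro m
    rw [integral_smul, integral_inner (hTslice_int m) (T m)]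
    show c m • (inner ℂ (T m) (T m) : ℂ) = _
    have h2 : (inner ℂ (T m) (T m) : ℂ) = ((‖T m‖ : ℂ)) ^ 2 := inner_self_eq_norm_sq_to_K _
    rw [h2, Complex.real_smul]
    push_cast
    ring
  -- assemble
  refine ⟨∫ m, c m * ‖T m‖ ^ 2 ∂μ, ?_, ?_⟩
  · apply integral_nonneg
    intro m
    exact mul_nonneg (hcnn m) (sq_nonneg _)
  · calc (∫ g, ∫ m, (inner ℂ (s m) (ρ g (s (g⁻¹ • m))) : ℂ) ∂μ ∂μG)
        = ∫ g, ∫ m, (inner ℂ (ρ g⁻¹ (s (g • m))) (s m) : ℂ) ∂μ ∂μG :=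
          integral_congr_ae (Filter.Eventually.of_forall fun g => stepA g)
      _ = ∫ m, ∫ g, (inner ℂ (ρ g⁻¹ (s (g • m))) (s m) : ℂ) ∂μG ∂μ := stepB
      _ = ∫ m, ∫ g, c (g⁻¹ • m) • (inner ℂ (T m) (s m) : ℂ) ∂μG ∂μ :=
          integral_congr_ae (Filter.Eventually.of_forall fun m =>
            (stepC m).trans (stepD m))
      _ = ∫ g, ∫ m, c (g⁻¹ • m) • (inner ℂ (T m) (s m) : ℂ) ∂μ ∂μG := stepE
      _ = ∫ g, ∫ m, c m • (inner ℂ (T m) (ρ g⁻¹ (s (g • m))) : ℂ) ∂μ ∂μG :=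
          integral_congr_ae (Filter.Eventually.of_forall fun g => stepF g)
      _ = ∫ m, ∫ g, c m • (inner ℂ (T m) (ρ g⁻¹ (s (g • m))) : ℂ) ∂μG ∂μ := stepG
      _ = ∫ m, ((c m * ‖T m‖ ^ 2 : ℝ) : ℂ) ∂μ :=
          integral_congr_ae (Filter.Eventually.of_forall fun m => stepH m)
      _ = ((∫ m, c m * ‖T m‖ ^ 2 ∂μ : ℝ) : ℂ) := by
          exact integral_ofReal
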